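/- Let F: ℝⁿ → ℝ be twice differentiable with L_H-Lipschitz Hessian, let x_k ∈ ℝⁿ with g_k = ∇F(x_k), H_k = ∇²F(x_k), and let ĝ_k, Ĥ_k be approximations. Suppose d_k satisfies (Ĥ_k + λ_k I) d_k = -ĝ'_k with λ_k ≥ 0, ĝ'_k satisfying ‖ĝ_k - ĝ'_k‖ ≤ ε_eig, and let x_{k+1} = x_k + d_k. Then ‖∇F(x_{k+1})‖ ≤ ((L_H + 1)/2)‖d_k‖² + λ_k‖d_k‖ + ε_eig + ‖g_k - ĝ_k‖ + (1/2)‖Ĥ_k - H_k‖². -/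

import Mathlib

open InnerProductSpace

/-- Quadratic Taylor bound for a map with Lipschitz derivative. -/
lemma taylor_aux {E : Type*} [NormedAddCommGroup E] [NormedSpace ℝ E]
    {F : Type*} [NormedAddCommGroup F] [NormedSpace ℝ F]
    (G : E → F) (L : ℝ) (hG : Differentiable ℝ G)
    (hLip : ∀ x y : E, ‖fderiv ℝ G x - fderiv ℝ G y‖ ≤ L * ‖x - y‖)
    (x d : E) :
    ‖G (x + d) - G x - fderiv ℝ G x d‖ ≤ L / 2 * ‖d‖ ^ 2 := by
  set f : ℝ → F := fun t => G (x + t • d) - t • (fderiv ℝ G x d) with hfdef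
  have hderiv : ∀ t : ℝ, HasDerivAt f (fderiv ℝ G (x + t • d) d - fderiv ℝ G x d) t := by
    intro t
    have h1 : HasDerivAt (fun t : ℝ => x + t • d) d t := by
      simpa using ((hasDerivAt_id t).smul_const d).const_add x
    have h2 : HasDerivAt (fun t : ℝ => G (x + t • d)) (fderiv ℝ G (x + t • d) d) t :=
      (hG (x + t • d)).hasFDerivAt.comp_hasDerivAt t h1
    convert h2.sub ((hasDerivAt_id t).smul_const (fderiv ℝ G x d)) using 1 <;> simp [hfdef, funext_iff]
  have key : ∀ u ∈ Set.Icc (0:ℝ) 1, ‖f u - f 0‖ ≤ (L * ‖d‖ ^ 2 / 2) * u ^ 2 := by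
    intro u hu
    have := image_norm_le_of_norm_deriv_right_le_deriv_boundary
      (f := fun t => f t - f 0)
      (f' := fun t => fderiv ℝ G (x + t • d) d - fderiv ℝ G x d)
      (a := (0:ℝ)) (b := 1)
      ((continuous_iff_continuousAt.2 fun t => (hderiv t).continuousAt).sub continuous_const).continuousOn
      (fun t _ => (((hderiv t).sub_const (f 0))).hasDerivWithinAt)
      (B := fun t => (L * ‖d‖ ^ 2 / 2) * t ^ 2) (B' := fun t => (L * ‖d‖ ^ 2) * t)
      (by simp)
      (fun t => by
        have : HasDerivAt (fun t : ℝ => (L * ‖d‖ ^ 2 / 2) * t ^ 2)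
            ((L * ‖d‖ ^ 2 / 2) * (2 * t)) t := by
          simpa using ((hasDerivAt_pow 2 t)).const_mul (L * ‖d‖ ^ 2 / 2)
        convert this using 1; ring)
      (fun t ht => by
        have h1 : ‖fderiv ℝ G (x + t • d) d - fderiv ℝ G x d‖
            ≤ ‖fderiv ℝ G (x + t • d) - fderiv ℝ G x‖ * ‖d‖ := by
          have := (fderiv ℝ G (x + t • d) - fderiv ℝ G x).le_opNorm d
          simpa using this
        have h2 : ‖fderiv ℝ G (x + t • d) - fderiv ℝ G x‖ ≤ L * (t * ‖d‖) := by
          have := hLip (x + t • d) x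
          simpa [norm_smul, abs_of_nonneg ht.1] using this
        calc ‖fderiv ℝ G (x + t • d) d - fderiv ℝ G x d‖
            ≤ ‖fderiv ℝ G (x + t • d) - fderiv ℝ G x‖ * ‖d‖ := h1
          _ ≤ L * (t * ‖d‖) * ‖d‖ :=
              mul_le_mul_of_nonneg_right h2 (norm_nonneg d)
          _ = (L * ‖d‖ ^ 2) * t := by ring)
      hu
    simpa using this
  have h1 := key 1 (by norm_num)
  have hf1 : f 1 - f 0 = G (x + d) - G x - fderiv ℝ G x d := by
    simp [hfdef]; abel
  rw [hf1] at h1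
  calc ‖G (x + d) - G x - fderiv ℝ G x d‖ ≤ (L * ‖d‖ ^ 2 / 2) * 1 ^ 2 := h1
    _ = L / 2 * ‖d‖ ^ 2 := by ring

/-- gradient bound of the descent lemma for SHSODM. -/
theorem stmt_16 {n : ℕ} (F : EuclideanSpace ℝ (Fin n) → ℝ) (LH : ℝ)
    (hF : ContDiff ℝ 2 F)
    (hLip : ∀ x y : EuclideanSpace ℝ (Fin n),
      ‖fderiv ℝ (gradient F) x - fderiv ℝ (gradient F) y‖ ≤ LH * ‖x - y‖)
    (xk d ghat g' : EuclideanSpace ℝ (Fin n))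
    (Hhat : EuclideanSpace ℝ (Fin n) →L[ℝ] EuclideanSpace ℝ (Fin n))
    (lam : ℝ) (hlam : 0 ≤ lam) (εeig : ℝ) (hper : ‖ghat - g'‖ ≤ εeig)
    (hd : Hhat d + lam • d = -g') :
    ‖gradient F (xk + d)‖
      ≤ ((LH + 1) / 2) * ‖d‖ ^ 2 + lam * ‖d‖ + εeig
        + ‖gradient F xk - ghat‖
        + (1 / 2) * ‖Hhat - fderiv ℝ (gradient F) xk‖ ^ 2 := by
  set G : EuclideanSpace ℝ (Fin n) → EuclideanSpace ℝ (Fin n) := gradient F with hGdef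
  have hGc : ContDiff ℝ 1 G := by
    have h1 : ContDiff ℝ 1 (fderiv ℝ F) := hF.fderiv_right (by norm_num)
    exact (toDual ℝ (EuclideanSpace ℝ (Fin n))).symm.contDiff.comp h1
  have hGd : Differentiable ℝ G := hGc.differentiable one_ne_zero
  set H := fderiv ℝ G xk with hHdef
  have htaylor : ‖G (xk + d) - G xk - H d‖ ≤ LH / 2 * ‖d‖ ^ 2 :=
    taylor_aux G LH hGd hLip xk d
  have hE : ‖H d - Hhat d‖ ≤ 1 / 2 * ‖d‖ ^ 2 + 1 / 2 * ‖Hhat - H‖ ^ 2 := by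
    have h1 : ‖H d - Hhat d‖ ≤ ‖Hhat - H‖ * ‖d‖ := by
      have h2 := (Hhat - H).le_opNorm d
      have h3 : (Hhat - H) d = Hhat d - H d := rfl
      rw [h3] at h2
      rw [norm_sub_rev]
      exact h2
    nlinarith [sq_nonneg (‖Hhat - H‖ - ‖d‖), norm_nonneg d, norm_nonneg (Hhat - H)]
  have hD : ‖g' + Hhat d‖ = lam * ‖d‖ := by
    have : g' + Hhat d = -(lam • d) := by
      have := hd
      rw [eq_neg_iff_add_eq_zero] at this ⊢
      linear_combination (norm := abel) this
    rw [this, norm_neg, norm_smul, Real.norm_of_nonneg hlam]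
  have hdecomp : G (xk + d) =
      (G (xk + d) - G xk - H d) + (G xk - ghat) + (ghat - g') + (g' + Hhat d)
        + (H d - Hhat d) := by abel
  calc ‖G (xk + d)‖
      ≤ ‖G (xk + d) - G xk - H d‖ + ‖G xk - ghat‖ + ‖ghat - g'‖ + ‖g' + Hhat d‖
        + ‖H d - Hhat d‖ := by
        conv_lhs => rw [hdecomp]
        refine (norm_add_le _ _).trans (add_le_add_left ((norm_add_le _ _).trans
          (add_le_add_left ((norm_add_le _ _).trans
          (add_le_add_left (norm_add_le _ _) _)) _)) _)
    _ ≤ LH / 2 * ‖d‖ ^ 2 + ‖G xk - ghat‖ + εeig + lam * ‖d‖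
        + (1 / 2 * ‖d‖ ^ 2 + 1 / 2 * ‖Hhat - H‖ ^ 2) := by
        rw [hD]; gcongr
    _ = ((LH + 1) / 2) * ‖d‖ ^ 2 + lam * ‖d‖ + εeig + ‖G xk - ghat‖
        + (1 / 2) * ‖Hhat - H‖ ^ 2 := by ring
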